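/- Assume the classes are ordered so that ι_1 ≥ ι_2 ≥ ⋯ ≥ ι_K, where ι_k := (c_k + d_k θ_k)(μ_k + θ̃_k)/θ_k − c̃_k − d̃_k θ̃_k. Let l̂ := min{ l : ι_l ≤ 0 } (with l̂ := K+1 if all ι_l > 0), set b_k := λ_k/(μ_k + θ̃_k), and let k̂ := max{ k ∈ {0,1,…,l̂−1} : Σ_{l=1}^{k} b_l ≤ S }. Define x* by: x*^0_k = 0 and x*^1_k = b_k for k = 1,…,k̂; if k̂+1 < l̂, x*^1_{k̂+1} = S − Σ_{l=1}^{k̂} b_l and x*^0_{k̂+1} = (λ_{k̂+1} − (μ_{k̂+1} + θ̃_{k̂+1}) x*^1_{k̂+1})/θ_{k̂+1}; and x*^0_k = λ_k/θ_k, x*^1_k = 0 for all k ≥ min(k̂+2, l̂). Then x* is an optimal solution of the M/M/S+M LP. -/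

import Mathlib

open Finset

/-- Feasibility for the multi-class M/M/S+M LP. -/
def MMSMFeasible {K : ℕ} (lam mu th tht : Fin K → ℝ) (S : ℝ)
    (x0 x1 : Fin K → ℝ) : Prop :=
  (∀ k, 0 = lam k - mu k * x1 k - th k * x0 k - tht k * x1 k) ∧
  (∑ k, x1 k ≤ S) ∧ (∀ k, 0 ≤ x0 k) ∧ (∀ k, 0 ≤ x1 k)

/-- The objective of the multi-class M/M/S+M LP. -/
def MMSMCost {K : ℕ} (th tht c ct d dt : Fin K → ℝ) (x0 x1 : Fin K → ℝ) : ℝ :=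
  ∑ k, (c k * x0 k + ct k * x1 k + d k * th k * x0 k + dt k * tht k * x1 k)

/-- Threshold (exchange) argument for the fractional knapsack. -/
lemma mmsm_sum_iota_le {K : ℕ} (iota x y : Fin K → ℝ) (τ : ℝ)
    (h1 : ∀ k, 0 ≤ (iota k - τ) * (x k - y k))
    (h2 : 0 ≤ τ * (∑ k, x k - ∑ k, y k)) :
    ∑ k, iota k * y k ≤ ∑ k, iota k * x k := by
  have hs : 0 ≤ ∑ k, (iota k - τ) * (x k - y k) :=
    Finset.sum_nonneg fun k _ => h1 k
  have key : ∑ k, (iota k - τ) * (x k - y k) =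
      (∑ k, iota k * x k - ∑ k, iota k * y k) - τ * (∑ k, x k - ∑ k, y k) := by
    rw [mul_sub, Finset.mul_sum, Finset.mul_sum, ← Finset.sum_sub_distrib,
      ← Finset.sum_sub_distrib, ← Finset.sum_sub_distrib]
    exact Finset.sum_congr rfl fun k _ => by ring
  rw [key] at hs
  linarith

/-- The greedy point `x*` determined by the indices `ι_k` (classes are `0`-indexed: the `0`-based
cutoff `lh` equals `l̂ − 1` and `kh` equals `k̂` of the paper) is an optimal solution of the
M/M/S+M LP. -/
theorem mmsm_greedy_point_optimal
    {K : ℕ} (hK : 1 ≤ K)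
    (lam mu th tht c ct d dt : Fin K → ℝ) (S : ℝ)
    (hlam : ∀ k, 0 < lam k) (hmu : ∀ k, 0 < mu k) (hth : ∀ k, 0 < th k)
    (htht : ∀ k, 0 ≤ tht k) (hS : 0 < S)
    (iota : Fin K → ℝ)
    (hiota : ∀ k, iota k = (c k + d k * th k) * (mu k + tht k) / th k - ct k - dt k * tht k)
    (hmono : ∀ k l : Fin K, k ≤ l → iota l ≤ iota k)
    (b : Fin K → ℝ) (hb : ∀ k, b k = lam k / (mu k + tht k))
    (lh : ℕ) (hlh : lh = sInf ({n : ℕ | ∃ hn : n < K, iota ⟨n, hn⟩ ≤ 0} ∪ {K}))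
    (kh : ℕ) (hkh : kh = sSup {m : ℕ | m ≤ lh ∧
      ∑ l ∈ univ.filter (fun l : Fin K => l.val < m), b l ≤ S})
    (x0s x1s : Fin K → ℝ)
    (hx1 : ∀ k : Fin K, x1s k =
      if k.val < kh then b k
      else if k.val = kh ∧ kh < lh then
        S - ∑ l ∈ univ.filter (fun l : Fin K => l.val < kh), b l
      else 0)
    (hx0 : ∀ k : Fin K, x0s k =
      if k.val < kh then 0
      else if k.val = kh ∧ kh < lh then
        (lam k - (mu k + tht k) *
          (S - ∑ l ∈ univ.filter (fun l : Fin K => l.val < kh), b l)) / th k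
      else lam k / th k) :
    MMSMFeasible lam mu th tht S x0s x1s ∧
    (∀ y0 y1 : Fin K → ℝ, MMSMFeasible lam mu th tht S y0 y1 →
      MMSMCost th tht c ct d dt x0s x1s ≤ MMSMCost th tht c ct d dt y0 y1) := by
  -- basic positivity
  have hmt : ∀ k, 0 < mu k + tht k := fun k => add_pos_of_pos_of_nonneg (hmu k) (htht k)
  have hbpos : ∀ k, 0 < b k := fun k => by rw [hb k]; exact div_pos (hlam k) (hmt k)
  -- facts about lh
  have hKmem : K ∈ ({n : ℕ | ∃ hn : n < K, iota ⟨n, hn⟩ ≤ 0} ∪ {K}) := Or.inr rfl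
  have hlhK : lh ≤ K := hlh ▸ Nat.sInf_le hKmem
  have hltpos : ∀ (n : ℕ) (hn : n < K), n < lh → 0 < iota ⟨n, hn⟩ := by
    intro n hn hnlh
    by_contra h
    push_neg at h
    have hmem : n ∈ ({n : ℕ | ∃ hn : n < K, iota ⟨n, hn⟩ ≤ 0} ∪ {K}) := Or.inl ⟨hn, h⟩
    have := Nat.sInf_le hmem
    rw [← hlh] at this
    omega
  have hlhle : ∀ (hn : lh < K), iota ⟨lh, hn⟩ ≤ 0 := by
    intro hn
    have hne : ({n : ℕ | ∃ hn : n < K, iota ⟨n, hn⟩ ≤ 0} ∪ {K}).Nonempty := ⟨K, hKmem⟩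
    have hmem := Nat.sInf_mem hne
    rw [← hlh] at hmem
    rcases hmem with ⟨hn', h⟩ | h
    · exact h
    · exfalso; rw [Set.mem_singleton_iff] at h; omega
  -- facts about kh
  have h0mem : 0 ∈ {m : ℕ | m ≤ lh ∧
      ∑ l ∈ univ.filter (fun l : Fin K => l.val < m), b l ≤ S} := by
    constructor
    · omega
    · have : (univ.filter (fun l : Fin K => l.val < 0)) = ∅ := by
        ext l; simp
      rw [this]; simpa using hS.le
  have hbdd : BddAbove {m : ℕ | m ≤ lh ∧
      ∑ l ∈ univ.filter (fun l : Fin K => l.val < m), b l ≤ S} :=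
    ⟨lh, fun m hm => hm.1⟩
  have hkhmem := Nat.sSup_mem ⟨0, h0mem⟩ hbdd
  rw [← hkh] at hkhmem
  obtain ⟨hkhlh, hsumle⟩ := hkhmem
  -- if kh < lh then the next partial sum exceeds S
  have hnext : kh < lh → S < ∑ l ∈ univ.filter (fun l : Fin K => l.val < kh + 1), b l := by
    intro hcase
    by_contra h
    push_neg at h
    have hmem : kh + 1 ∈ {m : ℕ | m ≤ lh ∧
        ∑ l ∈ univ.filter (fun l : Fin K => l.val < m), b l ≤ S} := ⟨by omega, h⟩
    have := le_csSup hbdd hmem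
    rw [← hkh] at this
    omega
  have hsplit : ∀ (hkK : kh < K),
      ∑ l ∈ univ.filter (fun l : Fin K => l.val < kh + 1), b l
        = ∑ l ∈ univ.filter (fun l : Fin K => l.val < kh), b l + b ⟨kh, hkK⟩ := by
    intro hkK
    have hset : univ.filter (fun l : Fin K => l.val < kh + 1)
        = insert (⟨kh, hkK⟩ : Fin K) (univ.filter (fun l : Fin K => l.val < kh)) := by
      ext l
      simp only [Finset.mem_filter, Finset.mem_univ, true_and, Finset.mem_insert, Fin.ext_iff]
      omega
    rw [hset, Finset.sum_insert (by simp)]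
    ring
  -- notation for the partial value
  set P : ℝ := ∑ l ∈ univ.filter (fun l : Fin K => l.val < kh), b l with hP
  have hpart1 : kh < lh → 0 ≤ S - P := fun _ => by linarith
  have hpart2 : ∀ (hkK : kh < K), kh < lh → S - P ≤ b ⟨kh, hkK⟩ := by
    intro hkK hcase
    have h1 := hnext hcase
    rw [hsplit hkK] at h1
    linarith
  -- feasibility of the greedy point
  have hfeas : MMSMFeasible lam mu th tht S x0s x1s := by
    refine ⟨?_, ?_, ?_, ?_⟩
    · intro k
      rw [hx0 k, hx1 k]
      by_cases h1 : k.val < kh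
      · simp only [h1, if_pos]
        have := hb k
        have := hmt k
        rw [hb k]
        have e : (mu k + tht k) * (lam k / (mu k + tht k)) = lam k := mul_div_cancel₀ _ (hmt k).ne'
        linear_combination e
      · by_cases h2 : k.val = kh ∧ kh < lh
        · simp only [h1, if_neg, if_pos h2, if_false]
          have hthk := (hth k).ne'
          field_simp
          ring
        · simp only [h1, if_neg, h2, if_false]
          have hthk := (hth k).ne'
          field_simp
          ring
    · -- sum of x1s ≤ S
      by_cases hcase : kh < lh
      · have hkK : kh < K := lt_of_lt_of_le hcase hlhK
        have : ∑ k, x1s k = S := by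
          rw [← Finset.sum_filter_add_sum_filter_not univ (fun k : Fin K => k.val < kh)]
          have e1 : ∑ k ∈ univ.filter (fun k : Fin K => k.val < kh), x1s k = P := by
            apply Finset.sum_congr rfl
            intro k hk
            simp only [Finset.mem_filter] at hk
            rw [hx1 k, if_pos hk.2]
          have e2 : ∑ k ∈ univ.filter (fun k : Fin K => ¬ k.val < kh), x1s k = S - P := by
            rw [Finset.sum_eq_single_of_mem (⟨kh, hkK⟩ : Fin K)]
            · rw [hx1 ⟨kh, hkK⟩]
              simp [hcase]
            · simp
            · intro j hj hne
              simp only [Finset.mem_filter, not_lt] at hj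
              rw [hx1 j]
              have hjne : j.val ≠ kh := fun h => hne (Fin.ext h)
              rw [if_neg (by omega), if_neg (by tauto)]
          rw [e1, e2]; ring
        linarith
      · have : ∑ k, x1s k = P := by
          rw [hP, ← Finset.sum_filter_add_sum_filter_not univ (fun k : Fin K => k.val < kh) x1s]
          have e1 : ∑ k ∈ univ.filter (fun k : Fin K => k.val < kh), x1s k
              = ∑ l ∈ univ.filter (fun l : Fin K => l.val < kh), b l := by
            apply Finset.sum_congr rfl
            intro k hk
            simp only [Finset.mem_filter] at hk
            rw [hx1 k, if_pos hk.2]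
          have e2 : ∑ k ∈ univ.filter (fun k : Fin K => ¬ k.val < kh), x1s k = 0 := by
            apply Finset.sum_eq_zero
            intro j hj
            simp only [Finset.mem_filter, not_lt] at hj
            rw [hx1 j, if_neg (by omega), if_neg (by tauto)]
          rw [e1, e2]; ring
        linarith
    · intro k
      rw [hx0 k]
      by_cases h1 : k.val < kh
      · simp [h1]
      · by_cases h2 : k.val = kh ∧ kh < lh
        · simp only [h1, if_neg, if_pos h2, if_false]
          apply div_nonneg _ (hth k).le
          have hkK : kh < K := lt_of_lt_of_le h2.2 hlhK
          have hkeq : k = ⟨kh, hkK⟩ := Fin.ext h2.1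
          have := hpart2 hkK h2.2
          rw [hkeq, hb ⟨kh, hkK⟩] at *
          have h3 : (mu ⟨kh, hkK⟩ + tht ⟨kh, hkK⟩) * (S - P) ≤ lam ⟨kh, hkK⟩ := by
            rw [← le_div_iff₀' (hmt ⟨kh, hkK⟩)]
            exact this
          linarith
        · simp only [h1, if_neg, h2, if_false]
          exact div_nonneg (hlam k).le (hth k).le
    · intro k
      rw [hx1 k]
      by_cases h1 : k.val < kh
      · simp only [h1, if_pos]; exact (hbpos k).le
      · by_cases h2 : k.val = kh ∧ kh < lh
        · simp only [h1, if_neg, if_pos h2, if_false]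
          exact hpart1 h2.2
        · simp [h1, h2]
  refine ⟨hfeas, ?_⟩
  -- cost formula for feasible points
  have hcost : ∀ y0 y1 : Fin K → ℝ, MMSMFeasible lam mu th tht S y0 y1 →
      MMSMCost th tht c ct d dt y0 y1
        = (∑ k, (c k + d k * th k) * lam k / th k) - ∑ k, iota k * y1 k := by
    intro y0 y1 hy
    obtain ⟨hbal, _, _, _⟩ := hy
    unfold MMSMCost
    rw [← Finset.sum_sub_distrib]
    apply Finset.sum_congr rfl
    intro k _
    have h := hbal k
    have hthk := (hth k).ne'
    have hy0 : y0 k = (lam k - (mu k + tht k) * y1 k) / th k := by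
      field_simp
      linarith
    rw [hy0, hiota k]
    field_simp
    ring
  -- bound: any feasible y1 is at most b
  have hyb : ∀ y0 y1 : Fin K → ℝ, MMSMFeasible lam mu th tht S y0 y1 →
      ∀ k, y1 k ≤ b k := by
    intro y0 y1 hy k
    obtain ⟨hbal, _, hy0, _⟩ := hy
    have h := hbal k
    have h2 : 0 ≤ th k * y0 k := mul_nonneg (hth k).le (hy0 k)
    rw [hb k, le_div_iff₀ (hmt k)]
    nlinarith
  -- key knapsack inequality
  intro y0 y1 hy
  rw [hcost y0 y1 hy, hcost x0s x1s hfeas]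
  have hyS : ∑ k, y1 k ≤ S := hy.2.1
  have hy1nn : ∀ k, 0 ≤ y1 k := hy.2.2.2
  have hybk : ∀ k, y1 k ≤ b k := hyb y0 y1 hy
  have hkey : ∑ k, iota k * y1 k ≤ ∑ k, iota k * x1s k := by
    by_cases hcase : kh < lh
    · have hkK : kh < K := lt_of_lt_of_le hcase hlhK
      set τ : ℝ := iota ⟨kh, hkK⟩ with hτ
      have hτpos : 0 < τ := hltpos kh hkK hcase
      apply mmsm_sum_iota_le iota x1s y1 τ
      · intro k
        rcases lt_trichotomy k.val kh with h1 | h1 | h1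
        · have hx : x1s k = b k := by rw [hx1 k, if_pos h1]
          have hi : τ ≤ iota k := hmono k ⟨kh, hkK⟩ (by simp [Fin.le_def]; omega)
          exact mul_nonneg (by linarith) (by rw [hx]; linarith [hybk k])
        · have hkeq : k = ⟨kh, hkK⟩ := Fin.ext h1
          rw [hkeq]
          simp [hτ]
        · have hx : x1s k = 0 := by
            rw [hx1 k, if_neg (by omega), if_neg (by omega)]
          have hi : iota k ≤ τ := hmono ⟨kh, hkK⟩ k (by simp [Fin.le_def]; omega)
          rw [hx]
          nlinarith [hy1nn k]
      · have hsum : ∑ k, x1s k = S := by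
          rw [← Finset.sum_filter_add_sum_filter_not univ (fun k : Fin K => k.val < kh)]
          have e1 : ∑ k ∈ univ.filter (fun k : Fin K => k.val < kh), x1s k = P := by
            apply Finset.sum_congr rfl
            intro k hk
            simp only [Finset.mem_filter] at hk
            rw [hx1 k, if_pos hk.2]
          have e2 : ∑ k ∈ univ.filter (fun k : Fin K => ¬ k.val < kh), x1s k = S - P := by
            rw [Finset.sum_eq_single_of_mem (⟨kh, hkK⟩ : Fin K)]
            · rw [hx1 ⟨kh, hkK⟩]
              simp [hcase]
            · simp
            · intro j hj hne
              simp only [Finset.mem_filter, not_lt] at hj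
              rw [hx1 j]
              have hjne : j.val ≠ kh := fun h => hne (Fin.ext h)
              rw [if_neg (by omega), if_neg (by tauto)]
          rw [e1, e2]; ring
        rw [hsum]
        exact mul_nonneg hτpos.le (by linarith)
    · -- kh = lh
      apply mmsm_sum_iota_le iota x1s y1 0
      · intro k
        rcases lt_or_ge k.val kh with h1 | h1
        · have hx : x1s k = b k := by rw [hx1 k, if_pos h1]
          have hi : 0 < iota k := by
            have := hltpos k.val k.isLt (by omega)
            simpa using this
          rw [sub_zero, hx]
          exact mul_nonneg hi.le (by linarith [hybk k])
        · have hx : x1s k = 0 := by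
            rw [hx1 k, if_neg (by omega), if_neg (by tauto)]
          have hlhK' : lh < K := lt_of_le_of_lt (by omega : lh ≤ k.val) k.isLt
          have hi : iota k ≤ 0 := by
            have h2 : iota k ≤ iota ⟨lh, hlhK'⟩ :=
              hmono ⟨lh, hlhK'⟩ k (by simp [Fin.le_def]; omega)
            linarith [hlhle hlhK']
          rw [sub_zero, hx]
          nlinarith [hy1nn k]
      · simp
  linarith
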